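/- Suppose every follower i ∈ {1,…,N} plays s_i^m = B_i · R_m / (Σ_{j=1}^M R_j) for all chains m, where all B_i > 0, all R_m > 0, and N ≥ 2. Then for each follower n and each pair of chains m, M, the marginal-utility balance condition R_m·T_m/(s_n^m + T_m)^2 = R_M·T_M/(s_n^M + T_M)^2 holds, where T_m = Σ_{i ≠ n} s_i^m. -/

import Mathlib

theorem proportional_balance (N M : ℕ) (hN : 2 ≤ N)
    (B : Fin N → ℝ) (R : Fin M → ℝ)
    (hB : ∀ i, 0 < B i) (hR : ∀ m, 0 < R m)
    (s : Fin N → Fin M → ℝ)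
    (hs : ∀ i m, s i m = B i * R m / ∑ j, R j)
    (T : Fin N → Fin M → ℝ)
    (hT : ∀ n m, T n m = ∑ i ∈ Finset.univ.erase n, s i m) :
    ∀ (n : Fin N) (m m' : Fin M),
      R m * T n m / (s n m + T n m) ^ 2 = R m' * T n m' / (s n m' + T n m') ^ 2 := by
  intro n m m'
  have hSR : 0 < ∑ j, R j :=
    Finset.sum_pos (fun j _ => hR j) ⟨m, Finset.mem_univ m⟩
  have hne : (Finset.univ.erase n).Nonempty := by
    rw [← Finset.card_pos, Finset.card_erase_of_mem (Finset.mem_univ n)]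
    simp only [Finset.card_univ, Fintype.card_fin]
    omega
  have hC : 0 < ∑ i ∈ Finset.univ.erase n, B i :=
    Finset.sum_pos (fun i _ => hB i) hne
  have hSB : 0 < ∑ i, B i := Finset.sum_pos (fun i _ => hB i) ⟨n, Finset.mem_univ n⟩
  have key : ∀ k : Fin M, R k * T n k / (s n k + T n k) ^ 2 =
      (∑ i ∈ Finset.univ.erase n, B i) * (∑ j, R j) / (∑ i, B i) ^ 2 := by
    intro k
    have hTk : T n k = (∑ i ∈ Finset.univ.erase n, B i) * R k / ∑ j, R j := by
      rw [hT]
      simp only [hs]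
      rw [← Finset.sum_div, ← Finset.sum_mul]
    have hsum : s n k + T n k = (∑ i, B i) * R k / ∑ j, R j := by
      rw [hs, hTk, ← add_div,
        ← Finset.add_sum_erase _ B (Finset.mem_univ n)]
      ring
    rw [hsum, hTk]
    have hRk := (hR k).ne'
    field_simp
  rw [key m, key m']
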